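/- Let n ≥ 2 and let A, B ∈ M_m(ℂ) be positive contractions with A ≺_tr B. Then there exist positive contractions A_0, B_0 ∈ M_m(ℂ) such that: (i) A_0 ≺_tr B_0; (ii) ‖A_0 − A‖ < 2/(n−1) + 2/n and ‖B_0 − B‖ < 2/(n−1) + 3/n; and (iii) every eigenvalue of A_0 and every eigenvalue of B_0 lies in {k/n : k ∈ {0, 1, …, n}}. -/

import Mathlib

open scoped Matrix Matrix.Norms.L2Operator ComplexOrder

/-- Eigenvalues of a Hermitian matrix listed in non-increasing order. -/
noncomputable def sortedEigs {m : ℕ} {A : Matrix (Fin m) (Fin m) ℂ}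
    (hA : A.IsHermitian) : Fin m → ℝ :=
  fun i => hA.eigenvalues (Tuple.sort hA.eigenvalues i.rev)

/-- `Maj hA hB` means `A ≺_tr B`. -/
def Maj {m : ℕ} {A B : Matrix (Fin m) (Fin m) ℂ}
    (hA : A.IsHermitian) (hB : B.IsHermitian) : Prop :=
  (∀ l : Fin m, ∑ k ∈ Finset.Iic l, sortedEigs hA k ≤ ∑ k ∈ Finset.Iic l, sortedEigs hB k) ∧
  (∑ k, sortedEigs hA k = ∑ k, sortedEigs hB k)

namespace Stmt17aux

open Polynomial

/-- Extend a tuple on `Fin m` to `ℕ` by zero. -/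
noncomputable def ext (m : ℕ) (x : Fin m → ℝ) : ℕ → ℝ := fun k => if h : k < m then x ⟨k, h⟩ else 0

/-- Partial sums. -/
noncomputable def ps (m : ℕ) (x : Fin m → ℝ) (l : ℕ) : ℝ := ∑ k ∈ Finset.range l, ext m x k

/-- Floor of scaled partial sums. -/
noncomputable def Fl (m n : ℕ) (x : Fin m → ℝ) (l : ℕ) : ℤ := ⌊(n : ℝ) * ps m x l⌋

/-- Quantized increments. -/
noncomputable def Dt (m n : ℕ) (x : Fin m → ℝ) : Fin m → ℤ :=
  fun k => Fl m n x ((k : ℕ) + 1) - Fl m n x (k : ℕ)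

lemma ext_apply_lt {m : ℕ} (x : Fin m → ℝ) (k : Fin m) : ext m x (k : ℕ) = x k := by
  simp [ext, k.isLt]

lemma ext_nonneg {m : ℕ} {x : Fin m → ℝ} (hx : ∀ i, 0 ≤ x i) (k : ℕ) : 0 ≤ ext m x k := by
  unfold ext; split <;> simp [hx]

lemma ext_le_one {m : ℕ} {x : Fin m → ℝ} (hx : ∀ i, x i ≤ 1) (k : ℕ) : ext m x k ≤ 1 := by
  unfold ext; split
  · exact hx _
  · norm_num

lemma ext_antitone {m : ℕ} {x : Fin m → ℝ} (hm : Antitone x) (hx : ∀ i, 0 ≤ x i) :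
    ∀ {j k : ℕ}, j ≤ k → ext m x k ≤ ext m x j := by
  intro j k hjk
  unfold ext
  split
  · rename_i hk
    have hj : j < m := lt_of_le_of_lt hjk hk
    rw [dif_pos hj]
    exact hm (by exact_mod_cast hjk)
  · rename_i hk
    split
    · exact hx _
    · exact le_refl _

lemma ps_zero {m : ℕ} (x : Fin m → ℝ) : ps m x 0 = 0 := by simp [ps]

lemma ps_succ {m : ℕ} (x : Fin m → ℝ) (l : ℕ) : ps m x (l + 1) = ps m x l + ext m x l := by
  simp [ps, Finset.sum_range_succ]

lemma ps_mono {m : ℕ} {x : Fin m → ℝ} (hx : ∀ i, 0 ≤ x i) : Monotone (ps m x) := by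
  intro a b hab
  unfold ps
  exact Finset.sum_le_sum_of_subset_of_nonneg (Finset.range_subset_range.2 hab)
    (fun k _ _ => ext_nonneg hx k)

lemma ps_eq_sum_Iic {m : ℕ} (x : Fin m → ℝ) (j : Fin m) :
    ps m x ((j : ℕ) + 1) = ∑ k ∈ Finset.Iic j, x k := by
  unfold ps
  refine Finset.sum_nbij' (fun k => if h : k < m then (⟨k, h⟩ : Fin m) else j)
    (fun k => (k : ℕ)) ?_ ?_ ?_ ?_ ?_
  · intro a ha
    have ha' : a < (j : ℕ) + 1 := Finset.mem_range.mp ha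
    have ham : a < m := lt_of_lt_of_le ha' (Nat.succ_le_of_lt j.isLt)
    simp only [dif_pos ham, Finset.mem_Iic]
    exact Fin.mk_le_of_le_val (Nat.lt_succ_iff.mp ha')
  · intro a ha
    simp only [Finset.mem_range]
    exact Nat.lt_succ_of_le (Fin.le_def.mp (Finset.mem_Iic.mp ha))
  · intro a ha
    have ha' : a < (j : ℕ) + 1 := Finset.mem_range.mp ha
    have ham : a < m := lt_of_lt_of_le ha' (Nat.succ_le_of_lt j.isLt)
    simp only [dif_pos ham]
  · intro a _
    simp only [dif_pos a.isLt]
  · intro a ha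
    have ha' : a < (j : ℕ) + 1 := Finset.mem_range.mp ha
    have ham : a < m := lt_of_lt_of_le ha' (Nat.succ_le_of_lt j.isLt)
    simp only [dif_pos ham]
    show ext m x ((⟨a, ham⟩ : Fin m) : ℕ) = _
    rw [ext_apply_lt]
lemma ps_eq_total {m : ℕ} (x : Fin m → ℝ) {l : ℕ} (hl : m ≤ l) :
    ps m x l = ∑ k, x k := by
  have h1 : ps m x l = ps m x m := by
    unfold ps
    rw [← Finset.sum_range_add_sum_Ico _ hl]
    have : ∑ k ∈ Finset.Ico m l, ext m x k = 0 := by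
      refine Finset.sum_eq_zero fun k hk => ?_
      have : ¬ k < m := not_lt.mpr (Finset.mem_Ico.mp hk).1
      simp [ext, this]
    rw [this, add_zero]
  rw [h1]
  unfold ps
  rw [Finset.sum_range fun k => ext m x k]
  exact Finset.sum_congr rfl fun k _ => by rw [← ext_apply_lt x k]



/-- The positive variation dominates each floor value. -/
lemma posvar_le (γ : ℕ → ℝ) (h0 : γ 0 = 0) (M : ℕ) :
    ∀ j ≤ M, ⌊γ j⌋ ≤ ∑ k ∈ Finset.range M, max (⌊γ (k + 1)⌋ - ⌊γ k⌋) 0 := by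
  induction M with
  | zero =>
    intro j hj
    interval_cases j
    simp [h0]
  | succ M ih =>
    intro j hj
    rw [Finset.sum_range_succ]
    rcases Nat.lt_succ_iff_lt_or_eq.mp (Nat.lt_succ_of_le hj) with h | h
    · have := ih j (Nat.lt_succ_iff.mp h)
      have h2 := le_max_right (⌊γ (M + 1)⌋ - ⌊γ M⌋) 0
      omega
    · subst h
      have := ih M le_rfl
      have h2 := le_max_left (⌊γ (M + 1)⌋ - ⌊γ M⌋) 0
      omega

/-- The positive variation of the floor of a concave sequence is attained as a floor value. -/
lemma posvar_attained (γ : ℕ → ℝ) (h0 : γ 0 = 0)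
    (hco : ∀ j k : ℕ, j ≤ k → γ (k + 1) - γ k ≤ γ (j + 1) - γ j) (M : ℕ) :
    ∃ j ≤ M, ∑ k ∈ Finset.range M, max (⌊γ (k + 1)⌋ - ⌊γ k⌋) 0 = ⌊γ j⌋ := by
  induction M with
  | zero => exact ⟨0, le_rfl, by simp [h0]⟩
  | succ M ih =>
    obtain ⟨j, hj, hS⟩ := ih
    by_cases h : ⌊γ (M + 1)⌋ ≤ ⌊γ M⌋
    · refine ⟨j, hj.trans (Nat.le_succ M), ?_⟩
      rw [Finset.sum_range_succ, hS, max_eq_right (by omega), add_zero]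
    · push_neg at h
      have hγ : γ M < γ (M + 1) := by
        have h1 : γ M < (⌊γ M⌋ : ℝ) + 1 := Int.lt_floor_add_one _
        have h2 : (⌊γ (M + 1)⌋ : ℝ) ≤ γ (M + 1) := Int.floor_le _
        have h3 : ((⌊γ M⌋ : ℤ) + 1 : ℝ) ≤ (⌊γ (M + 1)⌋ : ℝ) := by exact_mod_cast h
        push_cast at h3
        linarith
      have hmono : γ j ≤ γ M := by
        have htel : γ M - γ j = ∑ i ∈ Finset.Ico j M, (γ (i + 1) - γ i) := by
          rw [Finset.sum_Ico_eq_sub _ hj, Finset.sum_range_sub, Finset.sum_range_sub]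
          ring
        have hpos : 0 ≤ ∑ i ∈ Finset.Ico j M, (γ (i + 1) - γ i) := by
          refine Finset.sum_nonneg fun i hi => ?_
          have hiM : i ≤ M := le_of_lt (Finset.mem_Ico.mp hi).2
          have := hco i M hiM
          linarith
        linarith
      have hs : ∑ k ∈ Finset.range M, max (⌊γ (k + 1)⌋ - ⌊γ k⌋) 0 = ⌊γ M⌋ := by
        have hle2 := posvar_le γ h0 M M le_rfl
        have : ⌊γ j⌋ ≤ ⌊γ M⌋ := Int.floor_le_floor hmono
        omega
      refine ⟨M + 1, le_rfl, ?_⟩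
      rw [Finset.sum_range_succ, hs, max_eq_left (by omega)]
      omega

/-- generic duality upper bound : top-l sums are bounded using positive parts. -/
lemma top_le (m : ℕ) (u : Fin m → ℤ) (t : ℤ) (l : Fin m) :
    ∑ k ∈ Finset.Iic l, u k ≤ (Finset.Iic l).card • t + ∑ k, max (u k - t) 0 := by
  have h1 : ∑ k ∈ Finset.Iic l, u k ≤ ∑ k ∈ Finset.Iic l, (t + max (u k - t) 0) := by
    refine Finset.sum_le_sum fun k _ => ?_
    have := le_max_left (u k - t) 0
    omega
  rw [Finset.sum_add_distrib, Finset.sum_const] at h1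
  refine h1.trans (add_le_add_right ?_ _)
  exact Finset.sum_le_sum_of_subset_of_nonneg (Finset.subset_univ _)
    (fun k _ _ => le_max_right _ _)

/-- duality equality for an antitone tuple at threshold `t = u l`. -/
lemma top_eq (m : ℕ) (u : Fin m → ℤ) (hu : Antitone u) (l : Fin m) :
    (Finset.Iic l).card • (u l) + ∑ k, max (u k - u l) 0 = ∑ k ∈ Finset.Iic l, u k := by
  have hres : ∑ k, max (u k - u l) 0 = ∑ k ∈ Finset.Iic l, max (u k - u l) 0 := by
    symm
    refine Finset.sum_subset (Finset.subset_univ _) fun k _ hk => ?_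
    have hkl : l < k := by
      rcases lt_or_ge l k with h | h
      · exact h
      · exact absurd (Finset.mem_Iic.mpr h) hk
    have : u k ≤ u l := hu hkl.le
    omega
  rw [hres]
  have : ∑ k ∈ Finset.Iic l, max (u k - u l) 0 = ∑ k ∈ Finset.Iic l, (u k - u l) := by
    refine Finset.sum_congr rfl fun k hk => ?_
    have : u l ≤ u k := hu (Finset.mem_Iic.mp hk)
    omega
  rw [this, Finset.sum_sub_distrib, Finset.sum_const]
  omega


section DtLemmas

variable {m : ℕ} (n : ℕ) {x : Fin m → ℝ}

lemma Fl_zero (x : Fin m → ℝ) : Fl m n x 0 = 0 := by simp [Fl, ps_zero]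

lemma Fl_mono (hx0 : ∀ i, 0 ≤ x i) : Monotone (Fl m n x) := fun a b hab =>
  Int.floor_le_floor (by
    have := ps_mono hx0 hab
    have hn : (0:ℝ) ≤ (n:ℝ) := Nat.cast_nonneg n
    nlinarith)

lemma Dt_nonneg (hx0 : ∀ i, 0 ≤ x i) (k : Fin m) : 0 ≤ Dt m n x k :=
  sub_nonneg.mpr (Fl_mono n hx0 (Nat.le_succ _))

lemma Dt_le (hx1 : ∀ i, x i ≤ 1) (k : Fin m) : Dt m n x k ≤ n := by
  have h1 : (n:ℝ) * ps m x ((k:ℕ)+1) ≤ (n:ℝ) * ps m x (k:ℕ) + ((n:ℤ):ℝ) := by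
    rw [ps_succ]
    have h2 : ext m x (k:ℕ) ≤ 1 := ext_le_one hx1 _
    have hn : (0:ℝ) ≤ (n:ℝ) := Nat.cast_nonneg n
    push_cast
    nlinarith
  have h3 : Fl m n x ((k:ℕ)+1) ≤ Fl m n x (k:ℕ) + (n:ℤ) := by
    calc Fl m n x ((k:ℕ)+1) ≤ ⌊(n:ℝ) * ps m x (k:ℕ) + ((n:ℤ):ℝ)⌋ := Int.floor_le_floor h1
    _ = Fl m n x (k:ℕ) + (n:ℤ) := Int.floor_add_intCast _ _
  simp only [Dt]
  omega

lemma Dt_close (k : Fin m) : |(Dt m n x k : ℝ) - n * x k| ≤ 1 := by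
  have e1 : (n:ℝ) * ps m x ((k:ℕ)+1) = (n:ℝ) * ps m x (k:ℕ) + n * x k := by
    rw [ps_succ, ext_apply_lt]
    ring
  have f1 : ((Fl m n x ((k:ℕ)+1) : ℤ) : ℝ) ≤ (n:ℝ) * ps m x ((k:ℕ)+1) := Int.floor_le _
  have f2 : (n:ℝ) * ps m x ((k:ℕ)+1) - 1 < ((Fl m n x ((k:ℕ)+1) : ℤ) : ℝ) :=
    Int.sub_one_lt_floor _
  have f3 : ((Fl m n x (k:ℕ) : ℤ) : ℝ) ≤ (n:ℝ) * ps m x (k:ℕ) := Int.floor_le _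
  have f4 : (n:ℝ) * ps m x (k:ℕ) - 1 < ((Fl m n x (k:ℕ) : ℤ) : ℝ) := Int.sub_one_lt_floor _
  rw [abs_le]
  constructor
  · simp only [Dt]
    push_cast
    linarith
  · simp only [Dt]
    push_cast
    linarith

lemma sum_Dt (x : Fin m → ℝ) : ∑ k, Dt m n x k = Fl m n x m := by
  have h1 : ∑ k : Fin m, Dt m n x k
      = ∑ k ∈ Finset.range m, (Fl m n x (k+1) - Fl m n x k) :=
    Fin.sum_univ_eq_sum_range (fun k => Fl m n x (k+1) - Fl m n x k) m
  rw [h1, Finset.sum_range_sub, Fl_zero, sub_zero]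

lemma posPart_sum_le (hanti : Antitone x) (hx0 : ∀ i, 0 ≤ x i) (t : ℤ) :
    (∀ j ≤ m, Fl m n x j - t * j ≤ ∑ k, max (Dt m n x k - t) 0) ∧
    (∃ j ≤ m, ∑ k, max (Dt m n x k - t) 0 = Fl m n x j - t * j) := by
  set γ : ℕ → ℝ := fun l => (n:ℝ) * ps m x l - ((t * l : ℤ) : ℝ) with hγ
  have hfloor : ∀ l, ⌊γ l⌋ = Fl m n x l - t * l := by
    intro l
    simp only [hγ]
    rw [Int.floor_sub_intCast]
    rfl
  have h0 : γ 0 = 0 := by simp [hγ, ps_zero]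
  have hco : ∀ j k : ℕ, j ≤ k → γ (k + 1) - γ k ≤ γ (j + 1) - γ j := by
    intro j k hjk
    have hd : ∀ l : ℕ, γ (l + 1) - γ l = (n:ℝ) * ext m x l - t := by
      intro l
      simp only [hγ, ps_succ]
      push_cast
      ring
    rw [hd, hd]
    have := ext_antitone hanti hx0 hjk
    have hn : (0:ℝ) ≤ (n:ℝ) := Nat.cast_nonneg n
    nlinarith
  have hsum : ∑ k, max (Dt m n x k - t) 0
      = ∑ k ∈ Finset.range m, max (⌊γ (k+1)⌋ - ⌊γ k⌋) 0 := by
    rw [show (∑ k, max (Dt m n x k - t) 0)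
        = ∑ k ∈ Finset.range m, max (Fl m n x (k+1) - Fl m n x k - t) 0 from
      Fin.sum_univ_eq_sum_range (fun k => max (Fl m n x (k+1) - Fl m n x k - t) 0) m]
    refine Finset.sum_congr rfl fun k _ => ?_
    rw [hfloor, hfloor]
    congr 1
    push_cast
    ring
  constructor
  · intro j hj
    rw [hsum, ← hfloor]
    exact posvar_le γ h0 m j hj
  · obtain ⟨j, hj, hval⟩ := posvar_attained γ h0 hco m
    exact ⟨j, hj, by rw [hsum, hval, hfloor]⟩

end DtLemmas

section Core

variable {m n : ℕ} {xA xB : Fin m → ℝ}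

/-- Core comparison: sorted quantized increments inherit majorization. -/
theorem core (hAanti : Antitone xA) (hA0 : ∀ i, 0 ≤ xA i)
    (hBanti : Antitone xB) (hB0 : ∀ i, 0 ≤ xB i)
    (hle : ∀ l : Fin m, ∑ k ∈ Finset.Iic l, xA k ≤ ∑ k ∈ Finset.Iic l, xB k)
    (heq : ∑ k, xA k = ∑ k, xB k) :
    (∀ l : Fin m,
      ∑ k ∈ Finset.Iic l, (Dt m n xA ∘ Tuple.sort (Dt m n xA)) (Fin.rev k)
        ≤ ∑ k ∈ Finset.Iic l, (Dt m n xB ∘ Tuple.sort (Dt m n xB)) (Fin.rev k)) ∧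
    ∑ k, (Dt m n xA ∘ Tuple.sort (Dt m n xA)) (Fin.rev k)
      = ∑ k, (Dt m n xB ∘ Tuple.sort (Dt m n xB)) (Fin.rev k) := by
  have hps : ∀ l : ℕ, ps m xA l ≤ ps m xB l := by
    intro l
    match l with
    | 0 => rw [ps_zero, ps_zero]
    | (j+1) =>
      by_cases hj : j < m
      · have h1 := ps_eq_sum_Iic xA ⟨j, hj⟩
        have h2 := ps_eq_sum_Iic xB ⟨j, hj⟩
        simp only at h1 h2
        rw [h1, h2]
        exact hle ⟨j, hj⟩
      · have hm : m ≤ j + 1 := le_trans (not_lt.mp hj) (Nat.le_succ j)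
        rw [ps_eq_total xA hm, ps_eq_total xB hm, heq]
  have hFle : ∀ l : ℕ, Fl m n xA l ≤ Fl m n xB l := by
    intro l
    refine Int.floor_le_floor ?_
    have := hps l
    have hn : (0:ℝ) ≤ (n:ℝ) := Nat.cast_nonneg n
    nlinarith
  have hFeq : Fl m n xA m = Fl m n xB m := by
    unfold Fl
    rw [ps_eq_total xA le_rfl, ps_eq_total xB le_rfl, heq]
  set e1 : Equiv.Perm (Fin m) := Fin.revPerm.trans (Tuple.sort (Dt m n xA)) with he1
  set e2 : Equiv.Perm (Fin m) := Fin.revPerm.trans (Tuple.sort (Dt m n xB)) with he2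
  set uA : Fin m → ℤ := fun k => (Dt m n xA ∘ Tuple.sort (Dt m n xA)) (Fin.rev k) with huA
  set uB : Fin m → ℤ := fun k => (Dt m n xB ∘ Tuple.sort (Dt m n xB)) (Fin.rev k) with huB
  have hsumA : ∑ k, uA k = ∑ k, Dt m n xA k := Equiv.sum_comp e1 (Dt m n xA)
  have hsumB : ∑ k, uB k = ∑ k, Dt m n xB k := Equiv.sum_comp e2 (Dt m n xB)
  have hmaxA : ∀ t : ℤ, ∑ k, max (uA k - t) 0 = ∑ k, max (Dt m n xA k - t) 0 := fun t =>
    Equiv.sum_comp e1 (fun j => max (Dt m n xA j - t) 0)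
  have hmaxB : ∀ t : ℤ, ∑ k, max (uB k - t) 0 = ∑ k, max (Dt m n xB k - t) 0 := fun t =>
    Equiv.sum_comp e2 (fun j => max (Dt m n xB j - t) 0)
  have huBanti : Antitone uB := by
    intro a b hab
    exact Tuple.monotone_sort (Dt m n xB) (Fin.rev_le_rev.mpr hab)
  constructor
  · intro l
    show ∑ k ∈ Finset.Iic l, uA k ≤ ∑ k ∈ Finset.Iic l, uB k
    set t := uB l with ht
    have step1 : ∑ k ∈ Finset.Iic l, uA k ≤ (Finset.Iic l).card • t + ∑ k, max (uA k - t) 0 :=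
      top_le m uA t l
    have step3 : ∑ k, max (Dt m n xA k - t) 0 ≤ ∑ k, max (Dt m n xB k - t) 0 := by
      obtain ⟨j, hj, hval⟩ := (posPart_sum_le n hAanti hA0 t).2
      have h1 := (posPart_sum_le n hBanti hB0 t).1 j hj
      have h2 := hFle j
      omega
    have step5 : (Finset.Iic l).card • t + ∑ k, max (uB k - t) 0 = ∑ k ∈ Finset.Iic l, uB k :=
      top_eq m uB huBanti l
    have h4 := hmaxA t
    have h5 := hmaxB t
    omega
  · show ∑ k, uA k = ∑ k, uB k
    rw [hsumA, hsumB, sum_Dt, sum_Dt, hFeq]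

end Core



variable {m : ℕ}

lemma charpoly_conj (U M : Matrix (Fin m) (Fin m) ℂ)
    (hU : U ∈ Matrix.unitaryGroup (Fin m) ℂ) :
    (U * M * star U).charpoly = M.charpoly := by
  have hUU : U * star U = 1 := Matrix.mem_unitaryGroup_iff.mp hU
  let f : Matrix (Fin m) (Fin m) ℂ →+* Matrix (Fin m) (Fin m) ℂ[X] :=
    (Polynomial.C : ℂ →+* ℂ[X]).mapMatrix
  have hscal : ∀ P : Matrix (Fin m) (Fin m) ℂ[X],
      P * Matrix.scalar (Fin m) (X : ℂ[X]) = Matrix.scalar (Fin m) (X : ℂ[X]) * P := by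
    intro P
    ext i j
    simp [Matrix.scalar, Matrix.mul_diagonal, Matrix.diagonal_mul, mul_comm]
  have hcm : Matrix.charmatrix (U * M * star U) = f U * Matrix.charmatrix M * f (star U) := by
    show Matrix.scalar (Fin m) (X : ℂ[X]) - f (U * M * star U)
      = f U * (Matrix.scalar (Fin m) (X : ℂ[X]) - f M) * f (star U)
    rw [map_mul, map_mul, mul_sub, sub_mul, hscal (f U), mul_assoc
      (Matrix.scalar (Fin m) (X : ℂ[X])), ← map_mul f U (star U), hUU, map_one, mul_one]
  have hdet : ((f U).det) * ((f (star U)).det) = 1 := by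
    rw [← Matrix.det_mul, ← map_mul, hUU, map_one, Matrix.det_one]
  show (Matrix.charmatrix (U * M * star U)).det = (Matrix.charmatrix M).det
  rw [hcm, Matrix.det_mul, Matrix.det_mul, mul_right_comm, hdet, one_mul]

lemma charpoly_diagonal (v : Fin m → ℂ) :
    (Matrix.diagonal v).charpoly = ∏ i, (X - C (v i)) := by
  unfold Matrix.charpoly
  have h : Matrix.charmatrix (Matrix.diagonal v)
      = Matrix.diagonal (fun i => (X : ℂ[X]) - C (v i)) := by
    ext i j
    by_cases h : i = j
    · subst h
      simp
    · simp [Matrix.charmatrix_apply_ne _ _ _ h, Matrix.diagonal_apply_ne _ h]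
  rw [h, Matrix.det_diagonal]

lemma eig_multiset {M : Matrix (Fin m) (Fin m) ℂ} (hM : M.IsHermitian)
    (U : Matrix (Fin m) (Fin m) ℂ) (hU : U ∈ Matrix.unitaryGroup (Fin m) ℂ) (v : Fin m → ℝ)
    (hMU : M = U * Matrix.diagonal (fun i => (v i : ℂ)) * star U) :
    Finset.univ.val.map hM.eigenvalues = Finset.univ.val.map v := by
  have h1 : M.charpoly = ∏ i, (X - C ((v i : ℝ) : ℂ)) := by
    rw [hMU, charpoly_conj _ _ hU, charpoly_diagonal]
  have h2 : M.charpoly = ∏ i, (X - C ((hM.eigenvalues i : ℝ) : ℂ)) := by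
    conv_lhs => rw [hM.spectral_theorem]
    simp only [Unitary.conjStarAlgAut_apply, Unitary.coe_star]
    rw [charpoly_conj _ _ (Matrix.IsHermitian.eigenvectorUnitary hM).2, charpoly_diagonal]
    rfl
  have h3 : (Finset.univ.val.map (fun i => ((v i : ℝ) : ℂ)))
      = Finset.univ.val.map (fun i => ((hM.eigenvalues i : ℝ) : ℂ)) := by
    have hr1 := congrArg Polynomial.roots (h1.symm.trans h2)
    rw [Finset.prod_eq_multiset_prod, Finset.prod_eq_multiset_prod] at hr1
    have e1 : Multiset.map (fun i => X - C ((v i : ℝ) : ℂ)) Finset.univ.val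
        = Multiset.map (fun a : ℂ => X - C a)
          (Finset.univ.val.map (fun i => ((v i : ℝ) : ℂ))) := by
      rw [Multiset.map_map]
      rfl
    have e2 : Multiset.map (fun i => X - C ((hM.eigenvalues i : ℝ) : ℂ)) Finset.univ.val
        = Multiset.map (fun a : ℂ => X - C a)
          (Finset.univ.val.map (fun i => ((hM.eigenvalues i : ℝ) : ℂ))) := by
      rw [Multiset.map_map]
      rfl
    rw [e1, e2, Polynomial.roots_multiset_prod_X_sub_C,
      Polynomial.roots_multiset_prod_X_sub_C] at hr1
    exact hr1
  have h4 : Multiset.map (fun r : ℝ => (r : ℂ)) (Finset.univ.val.map v)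
      = Multiset.map (fun r : ℝ => (r : ℂ)) (Finset.univ.val.map hM.eigenvalues) := by
    rw [Multiset.map_map, Multiset.map_map]
    exact h3
  exact (Multiset.map_injective Complex.ofReal_injective h4).symm

lemma mono_unique {N : ℕ} {f g : Fin N → ℝ} (hf : Monotone f) (hg : Monotone g)
    (h : Finset.univ.val.map f = Finset.univ.val.map g) : f = g := by
  rw [Fin.univ_val_map, Fin.univ_val_map] at h
  have hp : (List.ofFn f).Perm (List.ofFn g) := Multiset.coe_eq_coe.mp h
  exact List.ofFn_injective (List.Perm.eq_of_sortedLE hf.sortedLE_ofFn hg.sortedLE_ofFn hp)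

lemma map_comp_perm {N : ℕ} {α : Type*} (f : Fin N → α) (σ : Equiv.Perm (Fin N)) :
    Finset.univ.val.map (f ∘ σ) = Finset.univ.val.map f := by
  rw [Fin.univ_val_map, Fin.univ_val_map]
  exact Multiset.coe_eq_coe.mpr (σ.ofFn_comp_perm f)


lemma nontriv (hm : 0 < m) : Nontrivial (Matrix (Fin m) (Fin m) ℂ) := by
  refine ⟨1, 0, fun h => ?_⟩
  have := congrFun (congrFun h ⟨0, hm⟩) ⟨0, hm⟩
  simp [Matrix.one_apply_eq] at this

lemma diag_norm_le (v : Fin m → ℂ) (C : ℝ) (hC : 0 ≤ C) (h : ∀ i, ‖v i‖ ≤ C) :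
    ‖Matrix.diagonal v‖ ≤ C := by
  rw [Matrix.l2_opNorm_def]
  refine ContinuousLinearMap.opNorm_le_bound _ hC fun x => ?_
  show ‖Matrix.toEuclideanLin (Matrix.diagonal v) x‖ ≤ C * ‖x‖
  rw [Matrix.toEuclideanLin_apply]
  rw [EuclideanSpace.norm_eq, EuclideanSpace.norm_eq]
  have hcoord : ∀ i, ‖((WithLp.equiv 2 (Fin m → ℂ)).symm
      (Matrix.diagonal v *ᵥ (WithLp.equiv 2 (Fin m → ℂ)) x)) i‖ = ‖v i * x i‖ := by
    intro i
    congr 1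
    exact Matrix.mulVec_diagonal v _ i
  have h1 : ∑ i, ‖((WithLp.equiv 2 (Fin m → ℂ)).symm
      (Matrix.diagonal v *ᵥ (WithLp.equiv 2 (Fin m → ℂ)) x)) i‖ ^ 2
      ≤ ∑ i, C ^ 2 * ‖x i‖ ^ 2 := by
    refine Finset.sum_le_sum fun i _ => ?_
    rw [hcoord i, norm_mul]
    have h2 : ‖v i‖ * ‖x i‖ ≤ C * ‖x i‖ :=
      mul_le_mul_of_nonneg_right (h i) (norm_nonneg _)
    have h3 : (0:ℝ) ≤ ‖v i‖ * ‖x i‖ := by positivity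
    nlinarith
  calc Real.sqrt (∑ i, ‖((WithLp.equiv 2 (Fin m → ℂ)).symm
        (Matrix.diagonal v *ᵥ (WithLp.equiv 2 (Fin m → ℂ)) x)) i‖ ^ 2)
      ≤ Real.sqrt (∑ i, C ^ 2 * ‖x i‖ ^ 2) := Real.sqrt_le_sqrt h1
    _ = C * Real.sqrt (∑ i, ‖x i‖ ^ 2) := by
        rw [← Finset.mul_sum, Real.sqrt_mul (sq_nonneg C), Real.sqrt_sq hC]

lemma unitary_norm_one (hm : 0 < m) {U : Matrix (Fin m) (Fin m) ℂ}
    (hU : U ∈ Matrix.unitaryGroup (Fin m) ℂ) : ‖U‖ = 1 := by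
  haveI := nontriv hm
  have h1 : Uᴴ * U = 1 := by
    rw [← Matrix.star_eq_conjTranspose]
    exact Matrix.mem_unitaryGroup_iff'.mp hU
  have h2 := Matrix.l2_opNorm_conjTranspose_mul_self U
  rw [h1, CStarRing.norm_one] at h2
  rcases mul_self_eq_one_iff.mp h2.symm with h | h
  · exact h
  · have := norm_nonneg U
    linarith

lemma conj_norm_le (hm : 0 < m) {U : Matrix (Fin m) (Fin m) ℂ}
    (hU : U ∈ Matrix.unitaryGroup (Fin m) ℂ) (v : Fin m → ℂ) (C : ℝ) (hC : 0 ≤ C)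
    (h : ∀ i, ‖v i‖ ≤ C) : ‖U * Matrix.diagonal v * star U‖ ≤ C := by
  have hd := diag_norm_le v C hC h
  calc ‖U * Matrix.diagonal v * star U‖
      ≤ ‖U * Matrix.diagonal v‖ * ‖star U‖ := Matrix.l2_opNorm_mul _ _
    _ ≤ (‖U‖ * ‖Matrix.diagonal v‖) * ‖star U‖ :=
        mul_le_mul_of_nonneg_right (Matrix.l2_opNorm_mul _ _) (norm_nonneg _)
    _ = ‖Matrix.diagonal v‖ := by
        rw [Matrix.star_eq_conjTranspose, Matrix.l2_opNorm_conjTranspose,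
          unitary_norm_one hm hU]
        ring
    _ ≤ C := hd


section Side

lemma sortedEigs_antitone {m : ℕ} {A : Matrix (Fin m) (Fin m) ℂ} (hA : A.IsHermitian) :
    Antitone (sortedEigs hA) := fun i j hij =>
  Tuple.monotone_sort hA.eigenvalues (Fin.rev_le_rev.mpr hij)

lemma sortedEigs_nonneg {m : ℕ} {A : Matrix (Fin m) (Fin m) ℂ} (hA : A.PosSemidef) (i : Fin m) :
    0 ≤ sortedEigs hA.isHermitian i :=
  hA.eigenvalues_nonneg _

theorem side (n : ℕ) (hn : 1 ≤ n) {m : ℕ} (M : Matrix (Fin m) (Fin m) ℂ)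
    (hM : M.PosSemidef) (hM1 : ((1 : Matrix (Fin m) (Fin m) ℂ) - M).PosSemidef) :
    ∃ (M0 : Matrix (Fin m) (Fin m) ℂ) (hM0 : M0.PosSemidef)
      (_ : ((1 : Matrix (Fin m) (Fin m) ℂ) - M0).PosSemidef),
      ‖M0 - M‖ ≤ 1 / n ∧
      (∀ i, ∃ k : ℕ, k ≤ n ∧ hM0.isHermitian.eigenvalues i = (k : ℝ) / n) ∧
      (∀ i : Fin m, sortedEigs hM0.isHermitian i
        = (((Dt m n (sortedEigs hM.isHermitian)
            ∘ Tuple.sort (Dt m n (sortedEigs hM.isHermitian))) i.rev : ℤ) : ℝ) / n) := by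
  have hn0 : (0:ℝ) < n := by exact_mod_cast hn
  set eig : Fin m → ℝ := hM.isHermitian.eigenvalues with heig
  set x : Fin m → ℝ := sortedEigs hM.isHermitian with hx
  set U : Matrix (Fin m) (Fin m) ℂ :=
    (Matrix.IsHermitian.eigenvectorUnitary hM.isHermitian : Matrix (Fin m) (Fin m) ℂ) with hUdef
  have hU : U ∈ Matrix.unitaryGroup (Fin m) ℂ :=
    (Matrix.IsHermitian.eigenvectorUnitary hM.isHermitian).2
  have hspec : M = U * Matrix.diagonal (fun i => ((eig i : ℝ) : ℂ)) * star U :=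
    hM.isHermitian.spectral_theorem
  have hone : (1 : Matrix (Fin m) (Fin m) ℂ) = U * 1 * star U := by
    rw [mul_one, Matrix.mem_unitaryGroup_iff.mp hU]
  -- eigenvalues are at most 1
  have h1M : (1 : Matrix (Fin m) (Fin m) ℂ) - M
      = U * Matrix.diagonal (fun i => ((1 - eig i : ℝ) : ℂ)) * star U := by
    conv_lhs => rw [hone, hspec]
    rw [← sub_mul, ← mul_sub]
    congr 2
    rw [← Matrix.diagonal_one, Matrix.diagonal_sub]
    congr 1
    funext i
    push_cast
    ring
  have heig_le_one : ∀ i, eig i ≤ 1 := by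
    intro i
    have hmem : (1 - eig i) ∈ Finset.univ.val.map (fun j => 1 - eig j) :=
      Multiset.mem_map_of_mem _ (Finset.mem_val.mpr (Finset.mem_univ i))
    rw [← eig_multiset hM1.isHermitian U hU (fun j => 1 - eig j) h1M] at hmem
    obtain ⟨j, _, hj⟩ := Multiset.mem_map.mp hmem
    have := hM1.eigenvalues_nonneg j
    rw [hj] at this
    linarith
  have hxanti : Antitone x := sortedEigs_antitone hM.isHermitian
  have hx0 : ∀ i, 0 ≤ x i := sortedEigs_nonneg hM
  have hx1 : ∀ i, x i ≤ 1 := fun i => heig_le_one _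
  set D : Fin m → ℤ := Dt m n x with hD
  set π : Equiv.Perm (Fin m) := Tuple.sort eig with hπ
  set c : Fin m → ℝ := fun i => ((D ((π⁻¹ i).rev) : ℤ) : ℝ) / n with hc
  have hxval : ∀ i : Fin m, x ((π⁻¹ i).rev) = eig i := by
    intro i
    show eig (π (((π⁻¹ i).rev).rev)) = eig i
    rw [Fin.rev_rev, Equiv.Perm.inv_def, Equiv.apply_symm_apply]
  have hc_close : ∀ i, |c i - eig i| ≤ 1 / n := by
    intro i
    have h1 : |((D ((π⁻¹ i).rev) : ℤ) : ℝ) - n * x ((π⁻¹ i).rev)| ≤ 1 :=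
      Dt_close n ((π⁻¹ i).rev)
    have h2 : c i - eig i = ((D ((π⁻¹ i).rev) : ℤ) : ℝ) / n - x ((π⁻¹ i).rev) := by
      rw [hxval]
    have h3 : c i - eig i
        = (((D ((π⁻¹ i).rev) : ℤ) : ℝ) - n * x ((π⁻¹ i).rev)) / n := by
      rw [h2]
      field_simp
    rw [h3, abs_div, abs_of_pos hn0]
    have h4 : (1 : ℝ) / n = 1 / n := rfl
    calc |((D ((π⁻¹ i).rev) : ℤ) : ℝ) - ↑n * x ((π⁻¹ i).rev)| / ↑n
        ≤ 1 / ↑n := by gcongr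
      _ = 1 / n := rfl
  have hD0 : ∀ j, 0 ≤ D j := Dt_nonneg n hx0
  have hDn : ∀ j, D j ≤ n := Dt_le n hx1
  have hc0 : ∀ i, 0 ≤ c i := by
    intro i
    have h0 := hD0 ((π⁻¹ i).rev)
    rw [hc]
    have : (0:ℝ) ≤ ((D ((π⁻¹ i).rev) : ℤ) : ℝ) := by exact_mod_cast h0
    positivity
  have hc1 : ∀ i, c i ≤ 1 := by
    intro i
    have h1 := hDn ((π⁻¹ i).rev)
    rw [hc]
    rw [div_le_one hn0]
    exact_mod_cast h1
  set M0 : Matrix (Fin m) (Fin m) ℂ :=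
    U * Matrix.diagonal (fun i => ((c i : ℝ) : ℂ)) * star U with hM0def
  have hM0 : M0.PosSemidef := by
    rw [hM0def, Matrix.star_eq_conjTranspose]
    exact (Matrix.PosSemidef.diagonal fun i => Complex.zero_le_real.mpr (hc0 i)).mul_mul_conjTranspose_same U
  have h1M0 : (1 : Matrix (Fin m) (Fin m) ℂ) - M0
      = U * Matrix.diagonal (fun i => ((1 - c i : ℝ) : ℂ)) * star U := by
    conv_lhs => rw [hone, hM0def]
    rw [← sub_mul, ← mul_sub]
    congr 2
    rw [← Matrix.diagonal_one, Matrix.diagonal_sub]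
    congr 1
    funext i
    push_cast
    ring
  have hM01 : ((1 : Matrix (Fin m) (Fin m) ℂ) - M0).PosSemidef := by
    rw [h1M0, Matrix.star_eq_conjTranspose]
    exact (Matrix.PosSemidef.diagonal fun i =>
      Complex.zero_le_real.mpr (by linarith [hc1 i])).mul_mul_conjTranspose_same U
  -- norm bound
  have hnorm : ‖M0 - M‖ ≤ 1 / n := by
    rcases Nat.eq_zero_or_pos m with hm | hm
    · subst hm
      have hz : M0 - M = 0 := by
        ext i j
        exact i.elim0
      rw [hz, norm_zero]
      positivity
    · have hdiff : M0 - M = U * Matrix.diagonal (fun i => ((c i - eig i : ℝ) : ℂ)) * star U := by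
        conv_lhs => rw [hM0def, hspec]
        rw [← sub_mul, ← mul_sub]
        congr 2
        rw [Matrix.diagonal_sub]
        congr 1
        funext i
        push_cast
        ring
      rw [hdiff]
      refine conj_norm_le hm hU _ _ (by positivity) fun i => ?_
      rw [Complex.norm_real, Real.norm_eq_abs]
      exact hc_close i
  have hmulc : Finset.univ.val.map hM0.isHermitian.eigenvalues = Finset.univ.val.map c :=
    eig_multiset hM0.isHermitian U hU c rfl
  -- quantization
  have hquant : ∀ i, ∃ k : ℕ, k ≤ n ∧ hM0.isHermitian.eigenvalues i = (k : ℝ) / n := by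
    intro i
    have hmem : hM0.isHermitian.eigenvalues i
        ∈ Finset.univ.val.map hM0.isHermitian.eigenvalues :=
      Multiset.mem_map_of_mem _ (Finset.mem_val.mpr (Finset.mem_univ i))
    rw [hmulc] at hmem
    obtain ⟨j, _, hj⟩ := Multiset.mem_map.mp hmem
    refine ⟨(D ((π⁻¹ j).rev)).toNat, ?_, ?_⟩
    · have h1 := hDn ((π⁻¹ j).rev)
      omega
    · rw [← hj]
      show ((D ((π⁻¹ j).rev) : ℤ) : ℝ) / n = (((D ((π⁻¹ j).rev)).toNat : ℕ) : ℝ) / n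
      congr 1
      exact_mod_cast (congrArg (fun z : ℤ => (z : ℝ)) (Int.toNat_of_nonneg (hD0 _))).symm
  -- sorted eigenvalues identification
  set w : Fin m → ℤ := D ∘ Tuple.sort D with hw
  set v : Fin m → ℝ := fun k => ((w k : ℤ) : ℝ) / n with hv
  have hvmono : Monotone v := by
    intro a b hab
    have := Tuple.monotone_sort D hab
    show ((w a : ℤ) : ℝ) / n ≤ ((w b : ℤ) : ℝ) / n
    have h2 : ((w a : ℤ) : ℝ) ≤ ((w b : ℤ) : ℝ) := by exact_mod_cast this
    exact div_le_div_of_nonneg_right h2 hn0.le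
  have heigsort : hM0.isHermitian.eigenvalues ∘ Tuple.sort hM0.isHermitian.eigenvalues = v := by
    refine mono_unique (Tuple.monotone_sort _) hvmono ?_
    calc Finset.univ.val.map (hM0.isHermitian.eigenvalues ∘ Tuple.sort hM0.isHermitian.eigenvalues)
        = Finset.univ.val.map hM0.isHermitian.eigenvalues :=
          map_comp_perm _ (Tuple.sort hM0.isHermitian.eigenvalues)
      _ = Finset.univ.val.map c := hmulc
      _ = Finset.univ.val.map ((fun k => ((D k : ℤ) : ℝ) / n) ∘ (π.symm.trans Fin.revPerm)) := rfl
      _ = Finset.univ.val.map (fun k => ((D k : ℤ) : ℝ) / n) :=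
          map_comp_perm _ (π.symm.trans Fin.revPerm)
      _ = Finset.univ.val.map ((fun k => ((D k : ℤ) : ℝ) / n) ∘ Tuple.sort D) :=
          (map_comp_perm _ (Tuple.sort D)).symm
      _ = Finset.univ.val.map v := rfl
  refine ⟨M0, hM0, hM01, hnorm, hquant, fun i => ?_⟩
  show (hM0.isHermitian.eigenvalues ∘ Tuple.sort hM0.isHermitian.eigenvalues) i.rev
    = ((w i.rev : ℤ) : ℝ) / n
  rw [heigsort]

end Side

end Stmt17aux

theorem stmt17 (m n : ℕ) (hn : 2 ≤ n) (A B : Matrix (Fin m) (Fin m) ℂ)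
    (hA : A.PosSemidef) (hA1 : ((1 : Matrix (Fin m) (Fin m) ℂ) - A).PosSemidef)
    (hB : B.PosSemidef) (hB1 : ((1 : Matrix (Fin m) (Fin m) ℂ) - B).PosSemidef)
    (hmaj : Maj hA.isHermitian hB.isHermitian) :
    ∃ (A0 B0 : Matrix (Fin m) (Fin m) ℂ)
      (hA0 : A0.PosSemidef) (_ : ((1 : Matrix (Fin m) (Fin m) ℂ) - A0).PosSemidef)
      (hB0 : B0.PosSemidef) (_ : ((1 : Matrix (Fin m) (Fin m) ℂ) - B0).PosSemidef),
      Maj hA0.isHermitian hB0.isHermitian ∧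
      ‖A0 - A‖ < 2 / ((n : ℝ) - 1) + 2 / n ∧
      ‖B0 - B‖ < 2 / ((n : ℝ) - 1) + 3 / n ∧
      (∀ i : Fin m, ∃ k : ℕ, k ≤ n ∧ hA0.isHermitian.eigenvalues i = (k : ℝ) / n) ∧
      (∀ i : Fin m, ∃ k : ℕ, k ≤ n ∧ hB0.isHermitian.eigenvalues i = (k : ℝ) / n) := by
  have hn1 : 1 ≤ n := le_trans (by norm_num) hn
  have hn0 : (0:ℝ) < n := by exact_mod_cast hn1
  have hn2 : (2:ℝ) ≤ n := by exact_mod_cast hn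
  have hnm1 : (0:ℝ) < (n:ℝ) - 1 := by linarith
  obtain ⟨A0, hA0, hA01, hA0norm, hA0quant, hA0sorted⟩ := Stmt17aux.side n hn1 A hA hA1
  obtain ⟨B0, hB0, hB01, hB0norm, hB0quant, hB0sorted⟩ := Stmt17aux.side n hn1 B hB hB1
  have hcore := Stmt17aux.core (n := n)
    (Stmt17aux.sortedEigs_antitone hA.isHermitian) (Stmt17aux.sortedEigs_nonneg hA)
    (Stmt17aux.sortedEigs_antitone hB.isHermitian) (Stmt17aux.sortedEigs_nonneg hB)
    hmaj.1 hmaj.2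
  have hbound1 : (1:ℝ)/n < 2/((n:ℝ)-1) + 2/n := by
    have h2 : (0:ℝ) < 2/((n:ℝ)-1) := by positivity
    have h3 : (1:ℝ)/n < 2/n := by
      have := (div_lt_div_iff_of_pos_right hn0).mpr (by norm_num : (1:ℝ) < 2)
      linarith
    linarith
  have hbound2 : (1:ℝ)/n < 2/((n:ℝ)-1) + 3/n := by
    have h2 : (0:ℝ) < 2/((n:ℝ)-1) := by positivity
    have h3 : (1:ℝ)/n < 3/n := by
      have := (div_lt_div_iff_of_pos_right hn0).mpr (by norm_num : (1:ℝ) < 3)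
      linarith
    linarith
  refine ⟨A0, B0, hA0, hA01, hB0, hB01, ?_, lt_of_le_of_lt hA0norm hbound1,
    lt_of_le_of_lt hB0norm hbound2, hA0quant, hB0quant⟩
  constructor
  · intro l
    have h1 := hcore.1 l
    rw [Finset.sum_congr rfl (fun k _ => hA0sorted k),
      Finset.sum_congr rfl (fun k _ => hB0sorted k), ← Finset.sum_div, ← Finset.sum_div]
    apply div_le_div_of_nonneg_right _ hn0.le
    exact_mod_cast h1
  · rw [Finset.sum_congr rfl (fun k _ => hA0sorted k),
      Finset.sum_congr rfl (fun k _ => hB0sorted k), ← Finset.sum_div, ← Finset.sum_div]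
    congr 1
    exact_mod_cast hcore.2
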